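/- Let X be a normed space, Ω a measure space, and suppose ϑ₁ ∈ L^∞(Ω) with 1 ≤ ϑ₁⁻ ≤ ϑ₁(x) ≤ ϑ₁⁺ < ∞, and ϑ₂ : Ω → [1,∞) measurable with ϑ₁(x)ϑ₂(x) ≥ 1 a.e. Then for every u ∈ L^{ϑ₁(x)ϑ₂(x)}(Ω) (variable exponent Lebesgue space with Luxemburg norm), ‖ |u|^{ϑ₁(·)} ‖_{L^{ϑ₂(·)}(Ω)} ≤ ‖u‖_{L^{ϑ₁(·)ϑ₂(·)}(Ω)}^{ϑ₁⁻} + ‖u‖_{L^{ϑ₁(·)ϑ₂(·)}(Ω)}^{ϑ₁⁺}. -/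

import Mathlib

open Real MeasureTheory

/-- The Luxemburg norm on the variable exponent Lebesgue space `L^{Θ(·)}(Ω)`. -/
noncomputable def luxNorm {Ω : Type*} [MeasurableSpace Ω] (μ : Measure Ω)
    (Θ : Ω → ℝ) (u : Ω → ℝ) : ℝ :=
  sInf {η : ℝ | 0 < η ∧ ∫ x, (|u x| / η) ^ (Θ x) ∂μ ≤ 1}

lemma measurable_rpow_of_nonneg {Ω : Type*} [MeasurableSpace Ω] {f g : Ω → ℝ}
    (hf0 : ∀ x, 0 ≤ f x) (hf : Measurable f) (hg : Measurable g) :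
    Measurable fun x => f x ^ g x := by
  have heq : (fun x => f x ^ g x) =
      fun x => if f x = 0 then (if g x = 0 then 1 else 0)
        else Real.exp (Real.log (f x) * g x) := by
    ext x
    rcases eq_or_lt_of_le (hf0 x) with h | h
    · simp only [← h, if_pos rfl]
      rcases eq_or_ne (g x) 0 with h2 | h2
      · simp [h2]
      · simp [h2, Real.zero_rpow h2]
    · rw [if_neg h.ne', Real.rpow_def_of_pos h]
  rw [heq]
  refine Measurable.ite (hf (measurableSet_singleton 0)) ?_ ?_
  · exact Measurable.ite (hg (measurableSet_singleton 0)) measurable_const measurable_const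
  · exact Real.measurable_exp.comp ((Real.measurable_log.comp hf).mul hg)

theorem luxNorm_rpow_le {Ω : Type*} [MeasurableSpace Ω] (μ : Measure Ω)
    (ϑ₁ ϑ₂ : Ω → ℝ) (hϑ₁ : Measurable ϑ₁) (hϑ₂ : Measurable ϑ₂)
    (c C : ℝ) (hc : 1 ≤ c) (hcC : c ≤ C)
    (hϑ₁lb : ∀ x, c ≤ ϑ₁ x) (hϑ₁ub : ∀ x, ϑ₁ x ≤ C)
    (hϑ₂lb : ∀ x, 1 ≤ ϑ₂ x)
    (hprod : ∀ᵐ x ∂μ, 1 ≤ ϑ₁ x * ϑ₂ x)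
    (u : Ω → ℝ) (hu : Measurable u)
    (humem : Integrable (fun x => |u x| ^ (ϑ₁ x * ϑ₂ x)) μ) :
    luxNorm μ ϑ₂ (fun x => |u x| ^ (ϑ₁ x)) ≤
      luxNorm μ (fun x => ϑ₁ x * ϑ₂ x) u ^ c +
        luxNorm μ (fun x => ϑ₁ x * ϑ₂ x) u ^ C := by
  have hc0 : (0:ℝ) < c := lt_of_lt_of_le one_pos hc
  have hC0 : (0:ℝ) < C := hc0.trans_le hcC
  have hϑ₂0 : ∀ x, (0:ℝ) ≤ ϑ₂ x := fun x => zero_le_one.trans (hϑ₂lb x)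
  have hϑ₁1 : ∀ x, (1:ℝ) ≤ ϑ₁ x := fun x => hc.trans (hϑ₁lb x)
  have ht1 : ∀ x, (1:ℝ) ≤ ϑ₁ x * ϑ₂ x := fun x => by
    nlinarith [hϑ₁1 x, hϑ₂lb x]
  set S₁ : Set ℝ := {η | 0 < η ∧ ∫ x, (|u x| / η) ^ (ϑ₁ x * ϑ₂ x) ∂μ ≤ 1} with hS₁def
  set S₂ : Set ℝ := {η | 0 < η ∧ ∫ x, (|u x| ^ (ϑ₁ x) / η) ^ (ϑ₂ x) ∂μ ≤ 1} with hS₂def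
  have hgoalL : luxNorm μ ϑ₂ (fun x => |u x| ^ (ϑ₁ x)) = sInf S₂ := by
    unfold luxNorm
    congr 1
    ext η
    simp only [hS₂def, Set.mem_setOf_eq, abs_of_nonneg (rpow_nonneg (abs_nonneg _) _)]
  have hgoalR : luxNorm μ (fun x => ϑ₁ x * ϑ₂ x) u = sInf S₁ := rfl
  rw [hgoalL, hgoalR]
  set N := sInf S₁ with hN
  -- S₂ is bounded below
  have hbdd₂ : BddBelow S₂ := ⟨0, fun x hx => hx.1.le⟩
  have hbdd₁ : BddBelow S₁ := ⟨0, fun x hx => hx.1.le⟩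
  -- measurability
  have hdiv : ∀ a b d : ℝ, 0 ≤ a → 0 < d → d ≤ b → a / b ≤ a / d := by
    intro a b d ha hd hdb
    rcases eq_or_lt_of_le ha with h | h
    · simp [← h]
    · exact (div_le_div_iff_of_pos_left h (hd.trans_le hdb) hd).mpr hdb
  have hmeasg : ∀ η : ℝ, 0 < η → Measurable fun x => (|u x| / η) ^ (ϑ₁ x * ϑ₂ x) :=
    fun η hη => measurable_rpow_of_nonneg
      (fun x => div_nonneg (abs_nonneg _) hη.le) (hu.abs.div_const η) (hϑ₁.mul hϑ₂)
  have hmeasf : ∀ η : ℝ, 0 < η → Measurable fun x => (|u x| ^ (ϑ₁ x) / η) ^ (ϑ₂ x) :=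
    fun η hη => measurable_rpow_of_nonneg
      (fun x => div_nonneg (rpow_nonneg (abs_nonneg _) _) hη.le)
      ((measurable_rpow_of_nonneg (fun x => abs_nonneg _) hu.abs hϑ₁).div_const η) hϑ₂
  -- S₁ is nonempty
  have hS₁ne : S₁.Nonempty := by
    set I := ∫ x, |u x| ^ (ϑ₁ x * ϑ₂ x) ∂μ with hI
    have hI0 : 0 ≤ I := integral_nonneg fun x => rpow_nonneg (abs_nonneg _) _
    refine ⟨max 1 I, lt_of_lt_of_le one_pos (le_max_left _ _), ?_⟩
    set η := max 1 I with hη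
    have hη1 : (1:ℝ) ≤ η := le_max_left _ _
    have hηpos : (0:ℝ) < η := lt_of_lt_of_le one_pos hη1
    have hpt : ∀ x, (|u x| / η) ^ (ϑ₁ x * ϑ₂ x) ≤ |u x| ^ (ϑ₁ x * ϑ₂ x) * η⁻¹ := by
      intro x
      rw [div_rpow (abs_nonneg _) hηpos.le, ← div_eq_mul_inv]
      refine hdiv _ _ _ (rpow_nonneg (abs_nonneg _) _) hηpos ?_
      calc η = η ^ (1:ℝ) := (rpow_one η).symm
        _ ≤ η ^ (ϑ₁ x * ϑ₂ x) := rpow_le_rpow_of_exponent_le hη1 (ht1 x)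
    have hint : Integrable (fun x => (|u x| / η) ^ (ϑ₁ x * ϑ₂ x)) μ := by
      refine (humem.mul_const η⁻¹).mono (hmeasg η hηpos).aestronglyMeasurable ?_
      filter_upwards with x
      rw [Real.norm_eq_abs, Real.norm_eq_abs,
        abs_of_nonneg (rpow_nonneg (div_nonneg (abs_nonneg _) hηpos.le) _)]
      refine le_trans (hpt x) (le_abs_self _)
    calc ∫ x, (|u x| / η) ^ (ϑ₁ x * ϑ₂ x) ∂μ
        ≤ ∫ x, |u x| ^ (ϑ₁ x * ϑ₂ x) * η⁻¹ ∂μ := by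
          refine integral_mono hint (humem.mul_const _) hpt
      _ = I * η⁻¹ := integral_mul_const _ _
      _ ≤ 1 := by
          rw [← div_eq_mul_inv, div_le_one hηpos]
          exact le_max_right _ _
  have hN0 : 0 ≤ N := le_csInf hS₁ne fun x hx => hx.1.le
  -- key: for every η ∈ S₁, sInf S₂ ≤ η^c + η^C
  have hkey : ∀ η ∈ S₁, sInf S₂ ≤ η ^ c + η ^ C := by
    rintro η ⟨hηpos, hηint⟩
    by_cases hg : Integrable (fun x => (|u x| / η) ^ (ϑ₁ x * ϑ₂ x)) μ
    · -- honest case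
      set η' := η ^ c + η ^ C with hη'
      have hη'pos : 0 < η' := add_pos (rpow_pos_of_pos hηpos c) (rpow_pos_of_pos hηpos C)
      refine csInf_le hbdd₂ ⟨hη'pos, ?_⟩
      have hpt : ∀ x, (|u x| ^ (ϑ₁ x) / η') ^ (ϑ₂ x) ≤ (|u x| / η) ^ (ϑ₁ x * ϑ₂ x) := by
        intro x
        rw [rpow_mul (div_nonneg (abs_nonneg _) hηpos.le)]
        refine rpow_le_rpow (div_nonneg (rpow_nonneg (abs_nonneg _) _) hη'pos.le) ?_ (hϑ₂0 x)
        rw [div_rpow (abs_nonneg _) hηpos.le]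
        refine hdiv _ _ _ (rpow_nonneg (abs_nonneg _) _) (rpow_pos_of_pos hηpos _) ?_
        rcases le_or_gt η 1 with h1 | h1
        · calc η ^ (ϑ₁ x) ≤ η ^ c :=
              rpow_le_rpow_of_exponent_ge hηpos h1 (hϑ₁lb x)
            _ ≤ η' := le_add_of_nonneg_right (rpow_nonneg hηpos.le _)
        · calc η ^ (ϑ₁ x) ≤ η ^ C :=
              rpow_le_rpow_of_exponent_le h1.le (hϑ₁ub x)
            _ ≤ η' := le_add_of_nonneg_left (rpow_nonneg hηpos.le _)
      calc ∫ x, (|u x| ^ (ϑ₁ x) / η') ^ (ϑ₂ x) ∂μ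
          ≤ ∫ x, (|u x| / η) ^ (ϑ₁ x * ϑ₂ x) ∂μ := by
            refine integral_mono_of_nonneg ?_ hg ?_
            · filter_upwards with x
              exact rpow_nonneg (div_nonneg (rpow_nonneg (abs_nonneg _) _) hη'pos.le) _
            · filter_upwards with x; exact hpt x
        _ ≤ 1 := hηint
    · -- degenerate case: the integrand at η ^ C is not integrable either
      have hηlt1 : η < 1 := by
        by_contra h
        push_neg at h
        apply hg
        refine humem.mono (hmeasg η hηpos).aestronglyMeasurable ?_
        filter_upwards with x
        rw [Real.norm_eq_abs, Real.norm_eq_abs,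
          abs_of_nonneg (rpow_nonneg (div_nonneg (abs_nonneg _) (lt_of_lt_of_le one_pos h).le) _),
          abs_of_nonneg (rpow_nonneg (abs_nonneg _) _)]
        refine rpow_le_rpow (div_nonneg (abs_nonneg _) (lt_of_lt_of_le one_pos h).le) ?_
          (zero_le_one.trans (ht1 x))
        exact div_le_self (abs_nonneg _) h
      have hηC : (0:ℝ) < η ^ C := rpow_pos_of_pos hηpos C
      have hf : ¬ Integrable (fun x => (|u x| ^ (ϑ₁ x) / η ^ C) ^ (ϑ₂ x)) μ := by
        intro hf
        apply hg
        refine hf.mono (hmeasg η hηpos).aestronglyMeasurable ?_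
        filter_upwards with x
        rw [Real.norm_eq_abs, Real.norm_eq_abs,
          abs_of_nonneg (rpow_nonneg (div_nonneg (abs_nonneg _) hηpos.le) _),
          abs_of_nonneg (rpow_nonneg (div_nonneg (rpow_nonneg (abs_nonneg _) _) hηC.le) _)]
        rw [rpow_mul (div_nonneg (abs_nonneg _) hηpos.le)]
        refine rpow_le_rpow (rpow_nonneg (div_nonneg (abs_nonneg _) hηpos.le) _) ?_ (hϑ₂0 x)
        rw [div_rpow (abs_nonneg _) hηpos.le]
        exact hdiv _ _ _ (rpow_nonneg (abs_nonneg _) _) hηC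
          (rpow_le_rpow_of_exponent_ge hηpos hηlt1.le (hϑ₁ub x))
      have : η ^ C ∈ S₂ := ⟨hηC, by rw [integral_undef hf]; norm_num⟩
      calc sInf S₂ ≤ η ^ C := csInf_le hbdd₂ this
        _ ≤ η ^ c + η ^ C := le_add_of_nonneg_left (rpow_nonneg hηpos.le _)
  -- pass to the infimum using continuity
  have hεbound : ∀ ε > 0, sInf S₂ ≤ (N + ε) ^ c + (N + ε) ^ C := by
    intro ε hε
    obtain ⟨η, hηS, hηlt⟩ := Real.lt_sInf_add_pos hS₁ne hε
    refine (hkey η hηS).trans ?_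
    have hη0 : 0 ≤ η := hηS.1.le
    gcongr
  have hcont : Filter.Tendsto (fun ε : ℝ => (N + ε) ^ c + (N + ε) ^ C)
      (nhdsWithin 0 (Set.Ioi 0)) (nhds (N ^ c + N ^ C)) := by
    have h1 : ContinuousAt (fun ε : ℝ => (N + ε) ^ c + (N + ε) ^ C) 0 := by
      have hb : ContinuousAt (fun ε : ℝ => N + ε) 0 := by fun_prop
      have hcc : ContinuousAt (fun t : ℝ => t ^ c) (N + 0) :=
        Real.continuousAt_rpow_const _ _ (Or.inr hc0.le)
      have hCC : ContinuousAt (fun t : ℝ => t ^ C) (N + 0) :=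
        Real.continuousAt_rpow_const _ _ (Or.inr hC0.le)
      exact (hcc.comp hb).add (hCC.comp hb)
    have := h1.tendsto
    simp only [add_zero] at this
    exact this.mono_left nhdsWithin_le_nhds
  refine ge_of_tendsto hcont ?_
  filter_upwards [self_mem_nhdsWithin] with ε hε
  exact hεbound ε hε
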